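/- Assume that gcd(h(x) - beta, x^n - 1) = 1 in F_q[x] for every nonzero beta in F_q. Then every nonzero codeword c of the quasi-cyclic code Q_q(f,g,h) satisfies w_s(c) >= d_q(f,g,h), where d_q(f,g,h) is the minimum (taken in the rational numbers) of the four quantities: d([g(x)]); d([(x^n-1)/gcd(x^n-1, h(x))]); d([lcm(f(x), g(x)/gcd(g(x), h(x)))]); and (d([f(x)]) + d([gcd(h(x)f(x), g(x))]) + (q-1) d([gcd(f(x), g(x))])) / q. -/

import Mathlib

open Polynomial Finset

noncomputable section

variable {F : Type*} [Field F] [DecidableEq F]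

/-- The vector in `F^n` corresponding to the residue class of a polynomial
in `F[x]/(x^n-1)`: the coefficients of its canonical representative of degree `< n`. -/
def vecOf (n : ℕ) : F[X] →ₗ[F] (Fin n → F) where
  toFun a := fun i => (a %ₘ (X ^ n - 1)).coeff i
  map_add' a b := by
    funext i
    simp [Polynomial.add_modByMonic]
  map_smul' c a := by
    funext i
    simp [Polynomial.smul_modByMonic]

/-- The quasi-cyclic code `Q_q(f,g,h)`: the `F`-subspace of `F^n × F^n ≃ F^{2n}`
corresponding to the `R`-submodule of `R²` generated by `([f],[h f])` and `(0,[g])`. -/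
def QCcode (n : ℕ) (f g h : F[X]) : Submodule F ((Fin n → F) × (Fin n → F)) where
  carrier := {v | ∃ a b : F[X], v = (vecOf n (a * f), vecOf n (a * h * f + b * g))}
  zero_mem' := ⟨0, 0, by simp; rfl⟩
  add_mem' := by
    rintro v w ⟨a1, b1, rfl⟩ ⟨a2, b2, rfl⟩
    refine ⟨a1 + a2, b1 + b2, ?_⟩
    have h1 : (a1 + a2) * f = a1 * f + a2 * f := by ring
    have h2 : (a1 + a2) * h * f + (b1 + b2) * g
        = (a1 * h * f + b1 * g) + (a2 * h * f + b2 * g) := by ring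
    rw [h1, h2, map_add (vecOf n) (a1 * f) (a2 * f),
      map_add (vecOf n) (a1 * h * f + b1 * g) (a2 * h * f + b2 * g)]
    rfl
  smul_mem' := by
    rintro c v ⟨a, b, rfl⟩
    refine ⟨c • a, c • b, ?_⟩
    have h1 : (c • a) * f = c • (a * f) := smul_mul_assoc c a f
    have h2 : (c • a) * h * f + (c • b) * g = c • (a * h * f + b * g) := by
      rw [smul_add, smul_mul_assoc, smul_mul_assoc, smul_mul_assoc]
    rw [h1, h2, map_smul, map_smul]
    rfl

/-- Hamming weight of a vector. -/
def hWt {n : ℕ} (x : Fin n → F) : ℕ := Nat.card {i : Fin n // x i ≠ 0}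

/-- Hamming weight of a vector of `F^{2n}` presented as a pair. -/
def hWt2 {n : ℕ} (v : (Fin n → F) × (Fin n → F)) : ℕ := hWt v.1 + hWt v.2

/-- Symplectic weight. -/
def sWt {n : ℕ} (v : (Fin n → F) × (Fin n → F)) : ℕ :=
  Nat.card {i : Fin n // (v.1 i, v.2 i) ≠ (0, 0)}

/-- Euclidean inner product on `F^n`. -/
def eInn {n : ℕ} (x y : Fin n → F) : F := ∑ i, x i * y i

/-- Euclidean inner product on `F^{2n}`. -/
def eInn2 {n : ℕ} (x y : (Fin n → F) × (Fin n → F)) : F := eInn x.1 y.1 + eInn x.2 y.2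

/-- Symplectic inner product on `F^{2n}`. -/
def sInn {n : ℕ} (x y : (Fin n → F) × (Fin n → F)) : F :=
  ∑ i, (x.1 i * y.2 i - x.2 i * y.1 i)

/-- Hermitian inner product on `F^{2n}` (with respect to `x ↦ x^q`). -/
def hInn2 (q : ℕ) {n : ℕ} (x y : (Fin n → F) × (Fin n → F)) : F :=
  (∑ i, x.1 i ^ q * y.1 i) + ∑ i, x.2 i ^ q * y.2 i

def sDualSet {n : ℕ} (C : Set ((Fin n → F) × (Fin n → F))) : Set ((Fin n → F) × (Fin n → F)) :=
  {x | ∀ y ∈ C, sInn x y = 0}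

def eDualSet {n : ℕ} (C : Set ((Fin n → F) × (Fin n → F))) : Set ((Fin n → F) × (Fin n → F)) :=
  {x | ∀ y ∈ C, eInn2 x y = 0}

def hDualSet (q : ℕ) {n : ℕ} (C : Set ((Fin n → F) × (Fin n → F))) :
    Set ((Fin n → F) × (Fin n → F)) :=
  {x | ∀ y ∈ C, hInn2 q x y = 0}

/-- `x^n f(1/x)` for `f` of degree `< n`. -/
def barPoly (n : ℕ) (f : F[X]) : F[X] := ∑ i ∈ f.support, C (f.coeff i) * X ^ (n - i)

/-- `f^⊥ = x^{deg f'} f'(1/x)` where `f f' = x^n - 1`. -/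
def perpPoly (n : ℕ) (f : F[X]) : F[X] := ((X ^ n - 1) /ₘ f).reverse

/-- coefficientwise `q`-th power. -/
def polyQ (q : ℕ) (f : F[X]) : F[X] := ∑ i ∈ f.support, C (f.coeff i ^ q) * X ^ i

/-- minimum Hamming weight of the cyclic code generated by `[u]`. -/
def cycDist (n : ℕ) (u : F[X]) : ℕ :=
  sInf {w | ∃ a : F[X], vecOf n (a * u) ≠ 0 ∧ w = hWt (vecOf n (a * u))}

/-- The general QC set generated by `([u₁],[v₁])` and `([u₂],[v₂])`. -/
def QCspan (n : ℕ) (u₁ v₁ u₂ v₂ : F[X]) : Set ((Fin n → F) × (Fin n → F)) :=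
  {w | ∃ a b : F[X], w = (vecOf n (a * u₁ + b * u₂), vecOf n (a * v₁ + b * v₂))}

/-- The lower bound `d_q(f,g,h)` for the symplectic weight (a rational number). -/
def dSymp (q n : ℕ) (f g h : F[X]) : ℚ :=
  min (min (min (cycDist n g : ℚ)
    (cycDist n ((X ^ n - 1) / GCDMonoid.gcd (X ^ n - 1) h) : ℚ))
    (cycDist n (GCDMonoid.lcm f (g / GCDMonoid.gcd g h)) : ℚ))
    ((cycDist n f + cycDist n (GCDMonoid.gcd (h * f) g) + ((q : ℚ) - 1) * cycDist n (GCDMonoid.gcd f g)) / q)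

/-- The lower bound `d_q^e(f,g,h)` for the minimum distance. -/
def dEucl (n : ℕ) (f g h : F[X]) : ℕ :=
  min (min (min (cycDist n g)
    (cycDist n ((X ^ n - 1) / GCDMonoid.gcd (X ^ n - 1) h)))
    (cycDist n (GCDMonoid.lcm f (g / GCDMonoid.gcd g h))))
    (cycDist n f + cycDist n (GCDMonoid.gcd (h * f) g))


-- ===== auxiliary lemmas =====

variable {n : ℕ}

lemma monicM (hn : 0 < n) : ((X:F[X]) ^ n - 1).Monic := by
  simpa using monic_X_pow_sub_C (1:F) hn.ne'

lemma degM (hn : 0 < n) : ((X:F[X]) ^ n - 1).degree = n := by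
  simpa using degree_X_pow_sub_C hn (1:F)

lemma vecOf_apply (p : F[X]) (i : Fin n) : vecOf n p i = (p %ₘ (X ^ n - 1)).coeff i := rfl

lemma vecOf_eq_zero_iff (hn : 0 < n) (p : F[X]) :
    vecOf n p = 0 ↔ ((X:F[X]) ^ n - 1) ∣ p := by
  rw [← (modByMonic_eq_zero_iff_dvd (monicM hn))]
  constructor
  · intro h0
    ext k
    rcases lt_or_ge k n with hk | hk
    · have := congrFun h0 ⟨k, hk⟩
      simpa [vecOf_apply] using this
    · refine coeff_eq_zero_of_degree_lt ?_
      calc (p %ₘ (X ^ n - 1)).degree < ((X:F[X])^n - 1).degree :=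
            degree_modByMonic_lt p (monicM hn)
        _ = (n : WithBot ℕ) := degM hn
        _ ≤ (k : WithBot ℕ) := by exact_mod_cast hk
  · intro h0
    funext i
    simp [vecOf_apply, h0]

lemma vecOf_modM (p : F[X]) (hn : 0 < n) : vecOf n (p %ₘ (X ^ n - 1)) = vecOf n p := by
  funext i
  rw [vecOf_apply, vecOf_apply,
    (modByMonic_eq_self_iff (monicM hn)).mpr
      ((degM (F := F) hn ▸ degree_modByMonic_lt p (monicM hn)))]

lemma cyc_le' (hn : 0 < n) {u p : F[X]} (hu : u ∣ p %ₘ (X ^ n - 1))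
    (hne : vecOf n p ≠ (0 : Fin n → F)) : cycDist n u ≤ hWt (vecOf n p) := by
  obtain ⟨c, hc⟩ := hu
  have hvec : vecOf n (c * u) = vecOf n p := by
    rw [mul_comm, ← hc, vecOf_modM p hn]
  refine Nat.sInf_le ⟨c, ?_, ?_⟩ <;> rw [hvec]
  exact hne

lemma cyc_le (hn : 0 < n) {u p : F[X]} (hup : u ∣ p) (huM : u ∣ (X:F[X]) ^ n - 1)
    (hne : vecOf n p ≠ (0 : Fin n → F)) : cycDist n u ≤ hWt (vecOf n p) := by
  refine cyc_le' hn ?_ hne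
  rw [modByMonic_eq_sub_mul_div p _]
  exact dvd_sub hup (huM.mul_right _)

lemma hWt_eq_card (x : Fin n → F) : hWt x = (univ.filter fun i => x i ≠ 0).card := by
  rw [hWt, Nat.card_eq_fintype_card, Fintype.card_subtype]

lemma sWt_eq_card (v : (Fin n → F) × (Fin n → F)) :
    sWt v = (univ.filter fun i => (v.1 i, v.2 i) ≠ (0, 0)).card := by
  rw [sWt, Nat.card_eq_fintype_card, Fintype.card_subtype]

lemma hWt_fst_le (v : (Fin n → F) × (Fin n → F)) : hWt v.1 ≤ sWt v := by
  rw [hWt_eq_card, sWt_eq_card]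
  refine card_le_card (fun i hi => ?_)
  simp only [mem_filter, mem_univ, true_and] at hi ⊢
  exact fun hEq => hi (congrArg Prod.fst hEq)

lemma hWt_snd_le (v : (Fin n → F) × (Fin n → F)) : hWt v.2 ≤ sWt v := by
  rw [hWt_eq_card, sWt_eq_card]
  refine card_le_card (fun i hi => ?_)
  simp only [mem_filter, mem_univ, true_and] at hi ⊢
  exact fun hEq => hi (congrArg Prod.snd hEq)

lemma key_count [Fintype F] (u w : Fin n → F) :
    Fintype.card F * sWt (u, w) = hWt u + ∑ β : F, hWt (fun i => w i - β * u i) := by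
  rw [sWt_eq_card, hWt_eq_card]
  simp only [hWt_eq_card, Finset.card_filter]
  rw [Finset.sum_comm, Finset.mul_sum, ← Finset.sum_add_distrib]
  refine Finset.sum_congr rfl fun i _ => ?_
  by_cases hu : u i = 0
  · by_cases hw : w i = 0
    · simp [hu, hw, Prod.ext_iff]
    · simp [hu, hw, Prod.ext_iff, Finset.card_univ]
  · have h1 : (univ.filter fun β : F => w i - β * u i ≠ 0) = univ.erase (w i * (u i)⁻¹) := by
      ext β
      simp only [mem_filter, mem_univ, true_and, mem_erase, sub_ne_zero]
      constructor
      · intro hne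
        refine ⟨fun hEq => hne ?_, trivial⟩
        rw [hEq, inv_mul_cancel_right₀ hu]
      · rintro ⟨hne, -⟩ hEq
        exact hne (by rw [hEq, mul_inv_cancel_right₀ hu])
    have h2 : ∑ β : F, (if w i - β * u i ≠ 0 then 1 else 0) = Fintype.card F - 1 := by
      rw [← Finset.card_filter, h1, Finset.card_erase_of_mem (mem_univ _), Finset.card_univ]
    rw [h2]
    have hq : 1 ≤ Fintype.card F := Fintype.card_pos
    have hpair : ((u i, w i) : F × F) ≠ (0, 0) := by simp [Prod.ext_iff, hu]
    simp only [ne_eq, hpair, not_false_eq_true, if_true, hu, if_pos]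
    omega

/-- lower bound `d_q(f,g,h)` on the symplectic weight of nonzero codewords. -/
theorem stmt5 [Fintype F] (n : ℕ) (hn : 0 < n) (f g h : F[X])
    (hf : f.Monic) (hg : g.Monic) (hh : h.Monic)
    (hfd : f.degree < n) (hgd : g.degree < n) (hhd : h.degree < n)
    (hfdvd : f ∣ X ^ n - 1) (hgdvd : g ∣ X ^ n - 1)
    (hcop : ∀ β : F, β ≠ 0 → GCDMonoid.gcd (h - C β) (X ^ n - 1) = 1) :
    ∀ v ∈ QCcode n f g h, v ≠ 0 →
      (sWt v : ℚ) ≥ dSymp (Fintype.card F) n f g h := by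
  intro v hv hvne
  obtain ⟨a, b, hvab⟩ := hv
  subst hvab
  set q : ℕ := Fintype.card F with hq_def
  have hq1 : 1 ≤ q := Fintype.card_pos
  set u : Fin n → F := vecOf n (a * f) with hu_def
  set w : Fin n → F := vecOf n (a * h * f + b * g) with hw_def
  set M : F[X] := X ^ n - 1 with hM
  have hd1 : dSymp q n f g h ≤ (cycDist n g : ℚ) :=
    ((min_le_left _ _).trans (min_le_left _ _)).trans (min_le_left _ _)
  have hd3 : dSymp q n f g h ≤ (cycDist n (GCDMonoid.lcm f (g / GCDMonoid.gcd g h)) : ℚ) :=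
    (min_le_left _ _).trans (min_le_right _ _)
  have hd4 : dSymp q n f g h ≤ ((cycDist n f : ℚ) + cycDist n (GCDMonoid.gcd (h * f) g)
      + ((q : ℚ) - 1) * cycDist n (GCDMonoid.gcd f g)) / q := min_le_right _ _
  rw [ge_iff_le]
  by_cases hu0 : u = 0
  · -- first block zero: use the bound d([g])
    have hw0 : w ≠ 0 := by
      intro h0
      exact hvne (by rw [Prod.mk_eq_zero]; exact ⟨hu0, h0⟩)
    have hMaf : M ∣ a * f := (vecOf_eq_zero_iff hn _).mp hu0
    have hgP : g ∣ a * h * f + b * g := by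
      refine dvd_add ?_ ⟨b, mul_comm b g⟩
      calc g ∣ M := hgdvd
        _ ∣ a * h * f := by
            obtain ⟨k, hk⟩ := hMaf
            exact ⟨h * k, by rw [show a * h * f = h * (a * f) by ring, hk]; ring⟩
    have hc : cycDist n g ≤ hWt w := cyc_le hn hgP hgdvd hw0
    calc dSymp q n f g h ≤ (cycDist n g : ℚ) := hd1
      _ ≤ (hWt w : ℚ) := by exact_mod_cast hc
      _ ≤ (sWt (u, w) : ℚ) := by exact_mod_cast hWt_snd_le (u, w)
  · have hbf : cycDist n f ≤ hWt u := cyc_le hn (dvd_mul_left f a) hfdvd hu0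
    have hgne : g ≠ 0 := hg.ne_zero
    have hD0 : GCDMonoid.gcd g h ≠ 0 := fun h0 => hgne ((gcd_eq_zero_iff g h).mp h0).1
    have hgD : GCDMonoid.gcd g h * (g / GCDMonoid.gcd g h) = g :=
      EuclideanDomain.mul_div_cancel' hD0 (gcd_dvd_left g h)
    have hg'g : g / GCDMonoid.gcd g h ∣ g := ⟨GCDMonoid.gcd g h, by rw [mul_comm]; exact hgD.symm⟩
    have hVb : ∀ β : F, vecOf n (a * h * f + b * g - C β * (a * f))
        = (fun i => w i - β * u i) := by
      intro β
      have h1 : a * h * f + b * g - C β * (a * f) = (a * h * f + b * g) - β • (a * f) := by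
        rw [Polynomial.smul_eq_C_mul]
      rw [h1, map_sub, map_smul]
      funext i
      simp [hw_def, hu_def]
    by_cases hsp : ∃ β : F, ∀ i, w i = β * u i
    · -- second block proportional to the first: use the bound d([lcm f (g/gcd g h)])
      obtain ⟨β, hβ⟩ := hsp
      have hMd : M ∣ a * (h - C β) * f + b * g := by
        rw [← vecOf_eq_zero_iff hn]
        have heq : a * (h - C β) * f + b * g = a * h * f + b * g - C β * (a * f) := by ring
        rw [heq, hVb β]
        funext i
        simp [hβ i]
      set r : F[X] := (a * f) %ₘ M with hr
      have hrdef : r = a * f - M * ((a * f) /ₘ M) := modByMonic_eq_sub_mul_div _ M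
      have hfr : f ∣ r := by
        rw [hrdef]
        exact dvd_sub (dvd_mul_left f a) (hfdvd.mul_right _)
      have hghr : g ∣ (h - C β) * r := by
        obtain ⟨t, ht⟩ := hMd
        have heq : (h - C β) * r
            = (a * (h - C β) * f + b * g) - b * g - M * ((h - C β) * ((a * f) /ₘ M)) := by
          rw [hrdef]; ring
        rw [heq, ht]
        exact dvd_sub (dvd_sub (hgdvd.trans ⟨t, rfl⟩) ⟨b, mul_comm b g⟩)
          (hgdvd.trans ⟨(h - C β) * ((a * f) /ₘ M), rfl⟩)
      have hg'r : g / GCDMonoid.gcd g h ∣ r := by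
        by_cases hβ0 : β = 0
        · subst hβ0
          rw [map_zero, sub_zero] at hghr
          have h1 : g ∣ GCDMonoid.gcd g h * r := by
            have h2 : g ∣ GCDMonoid.gcd (g * r) (h * r) :=
              dvd_gcd (dvd_mul_right g r) hghr
            rw [_root_.gcd_mul_right] at h2
            exact h2.trans (mul_dvd_mul_left _ (normalize_dvd_iff.mpr dvd_rfl))
          refine (mul_dvd_mul_iff_left hD0).mp ?_
          rw [hgD]
          exact h1
        · have hco : IsCoprime (h - C β) M := by
            have h1 : IsUnit (GCDMonoid.gcd (h - C β) M) := by
              rw [hcop β hβ0]; exact isUnit_one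
            exact (gcd_isUnit_iff _ _).mp h1
          have hcog : IsCoprime g (h - C β) :=
            (hco.of_isCoprime_of_dvd_right hgdvd).symm
          exact hg'g.trans (hcog.dvd_of_dvd_mul_left hghr)
      have hlcm : GCDMonoid.lcm f (g / GCDMonoid.gcd g h) ∣ (a * f) %ₘ M :=
        lcm_dvd hfr hg'r
      have hc := cyc_le' hn hlcm hu0
      calc dSymp q n f g h ≤ (cycDist n (GCDMonoid.lcm f (g / GCDMonoid.gcd g h)) : ℚ) := hd3
        _ ≤ (hWt u : ℚ) := by exact_mod_cast hc
        _ ≤ (sWt (u, w) : ℚ) := by exact_mod_cast hWt_fst_le (u, w)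
    · -- generic case: averaging over β ∈ F
      push_neg at hsp
      have hVne : ∀ β : F, (fun i => w i - β * u i) ≠ (0 : Fin n → F) := by
        intro β h0
        obtain ⟨i, hi⟩ := hsp β
        apply hi
        have := congrFun h0 i
        simpa [sub_eq_zero] using this
      have hb0 : cycDist n (GCDMonoid.gcd (h * f) g) ≤ hWt (fun i => w i - (0:F) * u i) := by
        rw [← hVb 0]
        refine cyc_le hn ?_ ((gcd_dvd_right (h*f) g).trans hgdvd) (by rw [hVb 0]; exact hVne 0)
        rw [map_zero, zero_mul, sub_zero]
        exact dvd_add ((gcd_dvd_left (h*f) g).trans ⟨a, by ring⟩)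
          ((gcd_dvd_right (h*f) g).trans ⟨b, by ring⟩)
      have hbβ : ∀ β : F, cycDist n (GCDMonoid.gcd f g) ≤ hWt (fun i => w i - β * u i) := by
        intro β
        rw [← hVb β]
        refine cyc_le hn ?_ ((gcd_dvd_left f g).trans hfdvd) (by rw [hVb β]; exact hVne β)
        exact dvd_sub (dvd_add ((gcd_dvd_left f g).trans ⟨a * h, by ring⟩)
          ((gcd_dvd_right f g).trans ⟨b, by ring⟩)) ((gcd_dvd_left f g).trans ⟨C β * a, by ring⟩)
      have hsum : q * sWt (u, w) = hWt u + ∑ β : F, hWt (fun i => w i - β * u i) :=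
        key_count u w
      have hsum2 : cycDist n (GCDMonoid.gcd (h * f) g)
          + (q - 1) * cycDist n (GCDMonoid.gcd f g)
          ≤ ∑ β : F, hWt (fun i => w i - β * u i) := by
        rw [← Finset.add_sum_erase univ _ (mem_univ (0:F))]
        refine add_le_add hb0 ?_
        have hcard : (univ.erase (0:F)).card = q - 1 := by
          rw [Finset.card_erase_of_mem (mem_univ _), Finset.card_univ]
        calc (q - 1) * cycDist n (GCDMonoid.gcd f g)
            = (univ.erase (0:F)).card • cycDist n (GCDMonoid.gcd f g) := by
              rw [hcard, smul_eq_mul]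
          _ ≤ ∑ β ∈ univ.erase (0:F), hWt (fun i => w i - β * u i) :=
              Finset.card_nsmul_le_sum _ _ _ (fun β _ => hbβ β)
      have hfinal : cycDist n f + cycDist n (GCDMonoid.gcd (h * f) g)
          + (q - 1) * cycDist n (GCDMonoid.gcd f g) ≤ q * sWt (u, w) := by
        rw [hsum]
        omega
      refine hd4.trans ?_
      rw [div_le_iff₀ (by exact_mod_cast hq1 : (0:ℚ) < q)]
      have hcast : ((cycDist n f + cycDist n (GCDMonoid.gcd (h * f) g)
          + (q - 1) * cycDist n (GCDMonoid.gcd f g) : ℕ) : ℚ)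
          ≤ ((q * sWt (u, w) : ℕ) : ℚ) := by exact_mod_cast hfinal
      push_cast [Nat.cast_sub hq1] at hcast
      calc (cycDist n f : ℚ) + cycDist n (GCDMonoid.gcd (h * f) g)
          + ((q : ℚ) - 1) * cycDist n (GCDMonoid.gcd f g)
          ≤ (q : ℚ) * sWt (u, w) := hcast
        _ = (sWt (u, w) : ℚ) * q := by ring


end
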